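/- If μ is a T-invariant probability measure, 𝒬 is a finite partition refining 𝒫 (every atom of 𝒬 is contained in an atom of 𝒫), and every atom S of 𝒫 contained in a fixed measurable set X' is split by 𝒬 into at most M pieces, while atoms of 𝒫 outside X' are not split, then H_μ(𝒬 | 𝒫) ≤ μ(X') · log M ≤ log M. -/

import Mathlib

open MeasureTheory

private lemma entropy_aux {κ : Type*} (s : Finset κ) (a : κ → ℝ) (m : ℝ)
    (hpos : ∀ j ∈ s, 0 < a j) (hsum : ∑ j ∈ s, a j = m) :
    ∑ j ∈ s, a j * Real.log (m / a j) ≤ m * Real.log s.card := by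
  rcases s.eq_empty_or_nonempty with rfl | hne
  · simp only [Finset.sum_empty] at hsum; simp [← hsum]
  have hm : 0 < m := hsum ▸ Finset.sum_pos hpos hne
  have key := Real.geom_mean_le_arith_mean_weighted s (fun j => a j / m) (fun j => m / a j)
    (fun j hj => div_nonneg (hpos j hj).le hm.le)
    (by rw [← Finset.sum_div, hsum, div_self hm.ne'])
    (fun j hj => div_nonneg hm.le (hpos j hj).le)
  have hrhs : ∑ j ∈ s, (a j / m) * (m / a j) = (s.card : ℝ) := by
    have h1 : ∀ j ∈ s, (a j / m) * (m / a j) = 1 := fun j hj => by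
      rw [div_mul_div_comm, mul_comm (a j) m]
      exact div_self (mul_ne_zero hm.ne' (hpos j hj).ne')
    rw [Finset.sum_congr rfl h1]
    simp
  rw [hrhs] at key
  have hprodpos : 0 < ∏ j ∈ s, (m / a j) ^ (a j / m) :=
    Finset.prod_pos fun j hj => Real.rpow_pos_of_pos (div_pos hm (hpos j hj)) _
  have hlog := Real.log_le_log hprodpos key
  rw [Real.log_prod (s := s) (f := fun j => (m / a j) ^ (a j / m)) (fun j hj => (Real.rpow_pos_of_pos (div_pos hm (hpos j hj)) _).ne')]
    at hlog
  have hlog' : ∑ j ∈ s, (a j / m) * Real.log (m / a j) ≤ Real.log s.card := by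
    refine le_trans (le_of_eq ?_) hlog
    exact Finset.sum_congr rfl fun j hj => by
      rw [Real.log_rpow (div_pos hm (hpos j hj))]
  calc ∑ j ∈ s, a j * Real.log (m / a j)
      = m * ∑ j ∈ s, (a j / m) * Real.log (m / a j) := by
        rw [Finset.mul_sum]
        exact Finset.sum_congr rfl fun j hj => by field_simp
    _ ≤ m * Real.log s.card := by
        exact mul_le_mul_of_nonneg_left hlog' hm.le

/-- If `μ` is a `T`-invariant probability measure, `𝒬 = {Q j}` is a finite
partition refining `𝒫 = {P i}`, every atom of `𝒫` contained in `X'` is split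
by `𝒬` into at most `M` pieces, and atoms of `𝒫` outside `X'` are not split,
then `H_μ(𝒬 | 𝒫) ≤ μ(X')·log M ≤ log M`. -/
theorem conditional_entropy_of_bounded_splitting {X : Type*} [MeasurableSpace X]
    (μ : Measure X) [IsProbabilityMeasure μ]
    (T : X → X) (hT : MeasurePreserving T μ μ)
    {ι κ : Type*} [Fintype ι] [Fintype κ]
    (P : ι → Set X) (Q : κ → Set X)
    (hmP : ∀ i, MeasurableSet (P i)) (hmQ : ∀ j, MeasurableSet (Q j))
    (hdP : Pairwise (Function.onFun Disjoint P))
    (hdQ : Pairwise (Function.onFun Disjoint Q))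
    (hcP : (⋃ i, P i) = Set.univ) (hcQ : (⋃ j, Q j) = Set.univ)
    (X' : Set X) (hX' : MeasurableSet X')
    (M : ℕ) (hM : 1 ≤ M)
    (hrefine : ∀ j, ∃ i, Q j ⊆ P i)
    (hsplit : ∀ i, P i ⊆ X' → Nat.card {j : κ // Q j ⊆ P i ∧ Q j ≠ ∅} ≤ M)
    (hnosplit : ∀ i, ¬P i ⊆ X' → ∃ j, Q j = P i) :
    (-∑ j, ∑ i, (μ (Q j ∩ P i)).toReal *
        Real.log ((μ (Q j ∩ P i)).toReal / (μ (P i)).toReal))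
        ≤ (μ X').toReal * Real.log M ∧
      (μ X').toReal * Real.log M ≤ Real.log M := by
  classical
  have hlogM : (0:ℝ) ≤ Real.log M := Real.log_natCast_nonneg M
  constructor
  · -- main part
    set f : ι → κ → ℝ := fun i j => (μ (Q j ∩ P i)).toReal with hf
    set m : ι → ℝ := fun i => (μ (P i)).toReal with hmdef
    have hsum_f : ∀ i, ∑ j, f i j = m i := by
      intro i
      have hU : (⋃ j, Q j ∩ P i) = P i := by
        rw [← Set.iUnion_inter, hcQ, Set.univ_inter]
      have hmeasU : μ (P i) = ∑' j, μ (Q j ∩ P i) := by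
        have h := measure_iUnion (μ := μ)
          (fun j j' hjj' => (hdQ hjj').mono Set.inter_subset_left Set.inter_subset_left)
          (fun j => (hmQ j).inter (hmP i))
        rw [hU] at h
        exact h
      show ∑ j, (μ (Q j ∩ P i)).toReal = (μ (P i)).toReal
      rw [hmeasU, tsum_fintype, ENNReal.toReal_sum (fun j _ => measure_ne_top μ _)]
    -- pointwise rewrite of -x log(x/m) as x log(m/x)
    have hrw : ∀ i j, -(f i j * Real.log (f i j / m i)) = f i j * Real.log (m i / f i j) := by
      intro i j
      rw [show m i / f i j = (f i j / m i)⁻¹ from (inv_div _ _).symm, Real.log_inv]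
      ring
    have main : ∀ i, (∑ j, f i j * Real.log (m i / f i j))
        ≤ if P i ⊆ X' then m i * Real.log M else 0 := by
      intro i
      by_cases hPi : P i ⊆ X'
      · rw [if_pos hPi]
        set s : Finset κ := Finset.univ.filter (fun j => f i j ≠ 0) with hs
        have hsub : ∑ j, f i j * Real.log (m i / f i j)
            = ∑ j ∈ s, f i j * Real.log (m i / f i j) := by
          refine (Finset.sum_subset (Finset.subset_univ s) ?_).symm
          intro j _ hjs
          have : f i j = 0 := by
            by_contra h
            exact hjs (Finset.mem_filter.mpr ⟨Finset.mem_univ j, h⟩)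
          rw [this, zero_mul]
        have hsums : ∑ j ∈ s, f i j = m i := by
          rw [← hsum_f i]
          refine Finset.sum_subset (Finset.subset_univ s) ?_
          intro j _ hjs
          by_contra h
          exact hjs (Finset.mem_filter.mpr ⟨Finset.mem_univ j, h⟩)
        have hpos : ∀ j ∈ s, 0 < f i j := fun j hj =>
          lt_of_le_of_ne ENNReal.toReal_nonneg (Ne.symm (Finset.mem_filter.mp hj).2)
        have hkey := entropy_aux s (f i) (m i) hpos hsums
        -- bound the cardinality of s
        have hcard : s.card ≤ M := by
          have hsub2 : s ⊆ Finset.univ.filter (fun j => Q j ⊆ P i ∧ Q j ≠ ∅) := by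
            intro j hj
            have hfne : f i j ≠ 0 := (Finset.mem_filter.mp hj).2
            have hμne : μ (Q j ∩ P i) ≠ 0 := by
              intro h
              exact hfne (by show (μ (Q j ∩ P i)).toReal = 0; simp [h])
            have hne : (Q j ∩ P i).Nonempty :=
              Set.nonempty_iff_ne_empty.mpr (fun h => hμne (by rw [h]; simp))
            obtain ⟨i', hi'⟩ := hrefine j
            have hii' : i' = i := by
              by_contra h
              have hd := hdP h
              have : Q j ∩ P i ⊆ P i' ∩ P i := Set.inter_subset_inter_left _ hi'
              rw [Set.disjoint_iff_inter_eq_empty.mp hd] at this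
              exact Set.not_nonempty_empty (Set.Nonempty.mono this hne)
            refine Finset.mem_filter.mpr ⟨Finset.mem_univ j, hii' ▸ hi', ?_⟩
            exact Set.nonempty_iff_ne_empty.mp (hne.mono Set.inter_subset_left)
          calc s.card ≤ (Finset.univ.filter (fun j => Q j ⊆ P i ∧ Q j ≠ ∅)).card :=
                Finset.card_le_card hsub2
            _ = Fintype.card {j : κ // Q j ⊆ P i ∧ Q j ≠ ∅} := (Fintype.card_subtype _).symm
            _ = Nat.card {j : κ // Q j ⊆ P i ∧ Q j ≠ ∅} := (Nat.card_eq_fintype_card).symm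
            _ ≤ M := hsplit i hPi
        have hlogcard : Real.log s.card ≤ Real.log M := by
          rcases Nat.eq_zero_or_pos s.card with h0 | h0
          · rw [h0]; simpa using hlogM
          · exact Real.log_le_log (by exact_mod_cast h0) (by exact_mod_cast hcard)
        calc ∑ j, f i j * Real.log (m i / f i j)
            = ∑ j ∈ s, f i j * Real.log (m i / f i j) := hsub
          _ ≤ m i * Real.log s.card := hkey
          _ ≤ m i * Real.log M :=
              mul_le_mul_of_nonneg_left hlogcard ENNReal.toReal_nonneg
      · rw [if_neg hPi]
        obtain ⟨j0, hj0⟩ := hnosplit i hPi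
        have : ∀ j, f i j * Real.log (m i / f i j) = 0 := by
          intro j
          by_cases hjj : j = j0
          · subst hjj
            have hQP : Q j ∩ P i = P i := by rw [hj0, Set.inter_self]
            have hfm : f i j = m i := by
              show (μ (Q j ∩ P i)).toReal = (μ (P i)).toReal
              rw [hQP]
            rcases eq_or_ne (m i) 0 with h | h
            · rw [hfm, h, zero_mul]
            · rw [hfm, div_self h, Real.log_one, mul_zero]
          · have : Q j ∩ P i = ∅ := by
              rw [← hj0]
              exact Set.disjoint_iff_inter_eq_empty.mp (hdQ hjj)
            have hz : f i j = 0 := by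
              show (μ (Q j ∩ P i)).toReal = 0
              simp [this]
            rw [hz, zero_mul]
        rw [Finset.sum_congr rfl (fun j _ => this j), Finset.sum_const, smul_zero]
    -- assemble
    have hswap : (-∑ j, ∑ i, f i j * Real.log (f i j / m i))
        = ∑ i, ∑ j, f i j * Real.log (m i / f i j) := by
      rw [Finset.sum_comm, ← Finset.sum_neg_distrib]
      exact Finset.sum_congr rfl fun i _ => by
        rw [← Finset.sum_neg_distrib]
        exact Finset.sum_congr rfl fun j _ => hrw i j
    rw [hswap]
    have hstep := Finset.sum_le_sum (fun i (_ : i ∈ Finset.univ) => main i)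
    refine hstep.trans ?_
    rw [← Finset.sum_filter]
    set t : Finset ι := Finset.univ.filter (fun i => P i ⊆ X') with ht
    have hμsum : ∑ i ∈ t, μ (P i) ≤ μ X' := by
      rw [← measure_biUnion_finset
        (fun i _ j _ hij => hdP hij) (fun i _ => hmP i)]
      refine measure_mono ?_
      intro x hx
      simp only [Set.mem_iUnion] at hx
      obtain ⟨i, hi, hxi⟩ := hx
      exact (Finset.mem_filter.mp hi).2 hxi
    have hrsum : ∑ i ∈ t, m i ≤ (μ X').toReal := by
      rw [hmdef, ← ENNReal.toReal_sum (fun i _ => measure_ne_top μ _)]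
      exact ENNReal.toReal_mono (measure_ne_top μ _) hμsum
    calc ∑ i ∈ t, m i * Real.log M = (∑ i ∈ t, m i) * Real.log M := by
          rw [Finset.sum_mul]
      _ ≤ (μ X').toReal * Real.log M := mul_le_mul_of_nonneg_right hrsum hlogM
  · have h1 : (μ X').toReal ≤ 1 := by
      simpa using ENNReal.toReal_mono (by simp) (prob_le_one (μ := μ))
    exact mul_le_of_le_one_left hlogM h1
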